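/- Let B : A → A be a monad in K equipped with a 2-cell Δ : B → B∘B satisfying the bialgebra-type compatibility μ-followed-by-Δ equals (μ × μ)∘(id × τ_{B,B} × id)∘(Δ × Δ) and Δ∘η = η × η, where τ_{B,B} is a left and right monadic distributive law. If (X, τ_{B,X}, ν_X) and (Y, τ_{B,Y}, ν_Y) are left Tambara B-modules, then X∘Y is a left B-module with action (ν_X × ν_Y)∘(id_B × τ_{B,X} × id_Y)∘(Δ × id_X × id_Y) : B∘X∘Y → X∘Y. -/

import Mathlib

open CategoryTheory Bicategory

namespace Paper

variable {K : Type*} [Bicategory K]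

/-- A monad in a bicategory. -/
structure Mnd (a : K) where
  E : a ⟶ a
  mul : E ≫ E ⟶ E
  unit : 𝟙 a ⟶ E
  assoc : (α_ E E E).inv ≫ mul ▷ E ≫ mul = E ◁ mul ≫ mul
  left_unit : (λ_ E).inv ≫ unit ▷ E ≫ mul = 𝟙 E
  right_unit : (ρ_ E).inv ≫ E ◁ unit ≫ mul = 𝟙 E

/-- A left module over a monad in a bicategory. -/
structure LMod {a : K} (B : Mnd a) {b : K} (M : a ⟶ b) where
  act : B.E ≫ M ⟶ M
  assoc : (α_ B.E B.E M).inv ≫ B.mul ▷ M ≫ act = B.E ◁ act ≫ act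
  unit : (λ_ M).inv ≫ B.unit ▷ M ≫ act = 𝟙 M

variable {a : K}

/-- Tensor (= horizontal composite) of two "unit elements". -/
def tunit {X Y : a ⟶ a} (u : 𝟙 a ⟶ X) (v : 𝟙 a ⟶ Y) : 𝟙 a ⟶ X ≫ Y :=
  (λ_ (𝟙 a)).inv ≫ u ▷ 𝟙 a ≫ X ◁ v

/-- Multiplication on a composite `X ≫ Y` built from multiplications on `X`, `Y`
and a distributive law `d : Y ≫ X ⟶ X ≫ Y`. -/
def tmul {X Y : a ⟶ a} (mX : X ≫ X ⟶ X) (mY : Y ≫ Y ⟶ Y) (d : Y ≫ X ⟶ X ≫ Y) :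
    (X ≫ Y) ≫ X ≫ Y ⟶ X ≫ Y :=
  (α_ X Y (X ≫ Y)).hom ≫ X ◁ ((α_ Y X Y).inv ≫ d ▷ Y ≫ (α_ X Y Y).hom) ≫
    (α_ X X (Y ≫ Y)).inv ≫ mX ▷ (Y ≫ Y) ≫ X ◁ mY

/-- Comultiplication on a composite `X ≫ Y`. -/
def tcomul {X Y : a ⟶ a} (cX : X ⟶ X ≫ X) (cY : Y ⟶ Y ≫ Y) (d : X ≫ Y ⟶ Y ≫ X) :
    X ≫ Y ⟶ (X ≫ Y) ≫ X ≫ Y :=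
  cX ▷ Y ≫ (α_ X X Y).hom ≫
    X ◁ (X ◁ cY ≫ (α_ X Y Y).inv ≫ d ▷ Y ≫ (α_ Y X Y).hom) ≫ (α_ X Y (X ≫ Y)).inv

/-- Extend distributive laws, moving `X` to the left across a composite `Y1 ≫ Y2`. -/
def dext {X Y1 Y2 : a ⟶ a} (d1 : Y1 ≫ X ⟶ X ≫ Y1) (d2 : Y2 ≫ X ⟶ X ≫ Y2) :
    (Y1 ≫ Y2) ≫ X ⟶ X ≫ Y1 ≫ Y2 :=
  (α_ Y1 Y2 X).hom ≫ Y1 ◁ d2 ≫ (α_ Y1 X Y2).inv ≫ d1 ▷ Y2 ≫ (α_ X Y1 Y2).hom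

/-- Extend distributive laws, moving `X` to the right across a composite `Y1 ≫ Y2`. -/
def dext' {X Y1 Y2 : a ⟶ a} (d1 : X ≫ Y1 ⟶ Y1 ≫ X) (d2 : X ≫ Y2 ⟶ Y2 ≫ X) :
    X ≫ Y1 ≫ Y2 ⟶ (Y1 ≫ Y2) ≫ X :=
  (α_ X Y1 Y2).inv ≫ d1 ▷ Y2 ≫ (α_ Y1 X Y2).hom ≫ Y1 ◁ d2 ≫ (α_ Y1 Y2 X).inv

/-- Convolution product of `f g : 𝟙 a ⟶ T` with respect to a multiplication on `T`. -/
def conv {T : a ⟶ a} (m : T ≫ T ⟶ T) (f g : 𝟙 a ⟶ T) : 𝟙 a ⟶ T :=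
  (λ_ (𝟙 a)).inv ≫ f ▷ 𝟙 a ≫ T ◁ g ≫ m

/-- Convolution product of `f g : T ⟶ 𝟙 a` with respect to a comultiplication on `T`. -/
def convC {T : a ⟶ a} (c : T ⟶ T ≫ T) (f g : T ⟶ 𝟙 a) : T ⟶ 𝟙 a :=
  c ≫ f ▷ T ≫ (λ_ T).hom ≫ g

/-- The multiplication on `E ≫ E ≫ E` built from `mul` and the distributive law `τ`. -/
def mul3 {E : a ⟶ a} (mul : E ≫ E ⟶ E) (τ : E ≫ E ⟶ E ≫ E) :
    (E ≫ E ≫ E) ≫ E ≫ E ≫ E ⟶ E ≫ E ≫ E :=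
  tmul mul (tmul mul mul τ) (dext τ τ)

/-- The multiplication on `E ≫ E ≫ E ≫ E`. -/
def mul4 {E : a ⟶ a} (mul : E ≫ E ⟶ E) (τ : E ≫ E ⟶ E ≫ E) :
    (E ≫ E ≫ E ≫ E) ≫ E ≫ E ≫ E ≫ E ⟶ E ≫ E ≫ E ≫ E :=
  tmul mul (mul3 mul τ) (dext τ (dext τ τ))

/-- The comultiplication on `E ≫ E ≫ E`. -/
def comul3 {E : a ⟶ a} (comul : E ⟶ E ≫ E) (τ : E ≫ E ⟶ E ≫ E) :
    E ≫ E ≫ E ⟶ (E ≫ E ≫ E) ≫ E ≫ E ≫ E :=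
  tcomul comul (tcomul comul comul τ) (dext' τ τ)

/-- The comultiplication on `E ≫ E ≫ E ≫ E`. -/
def comul4 {E : a ⟶ a} (comul : E ⟶ E ≫ E) (τ : E ≫ E ⟶ E ≫ E) :
    E ≫ E ≫ E ≫ E ⟶ (E ≫ E ≫ E ≫ E) ≫ E ≫ E ≫ E ≫ E :=
  tcomul comul (comul3 comul τ) (dext' τ (dext' τ τ))

/-- "Action of `Q ≫ P` on `X ≫ Y`": `P` crosses `X` via `dPX`, then `Q` acts on `X`
and `P` acts on `Y`. -/
def actT {b : K} {P Q X : a ⟶ a} {Y : a ⟶ b}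
    (dPX : P ≫ X ⟶ X ≫ P) (aQX : Q ≫ X ⟶ X) (aPY : P ≫ Y ⟶ Y) :
    (Q ≫ P) ≫ X ≫ Y ⟶ X ≫ Y :=
  (α_ Q P (X ≫ Y)).hom ≫ Q ◁ ((α_ P X Y).inv ≫ dPX ▷ Y ≫ (α_ X P Y).hom) ≫
    (α_ Q X (P ≫ Y)).inv ≫ aQX ▷ (P ≫ Y) ≫ X ◁ aPY

/-- A left Tambara module over a monad `B` equipped with a distributive law
`τBB : B ≫ B ⟶ B ≫ B`: an object `(X, τ_{B,X})` of `Mnd(K)(B)` together with a left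
`B`-action which is a morphism in `Mnd(K)(B)`. -/
structure TambMod {a : K} (B : Mnd a) (τBB : B.E ≫ B.E ⟶ B.E ≫ B.E) where
  X : a ⟶ a
  d : B.E ≫ X ⟶ X ≫ B.E
  act : B.E ≫ X ⟶ X
  d_mul : B.E ◁ d ≫ (α_ B.E X B.E).inv ≫ d ▷ B.E ≫ (α_ X B.E B.E).hom ≫ X ◁ B.mul
      = (α_ B.E B.E X).inv ≫ B.mul ▷ X ≫ d
  d_unit : (λ_ X).inv ≫ B.unit ▷ X ≫ d = (ρ_ X).inv ≫ X ◁ B.unit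
  act_assoc : (α_ B.E B.E X).inv ≫ B.mul ▷ X ≫ act = B.E ◁ act ≫ act
  act_unit : (λ_ X).inv ≫ B.unit ▷ X ≫ act = 𝟙 X
  /-- the action is a morphism in `Mnd(K)(B)`, i.e. `τ_{B,X}` is natural with
  respect to the left action -/
  d_act : B.E ◁ act ≫ d
      = (α_ B.E B.E X).inv ≫ τBB ▷ X ≫ (α_ B.E B.E X).hom ≫ B.E ◁ d ≫
        (α_ B.E X B.E).inv ≫ act ▷ B.E

/-- Associativity of the diagonal action on the composite of two Tambara modules. -/
lemma aux_assoc {b : K} {E X : a ⟶ a} {Y : a ⟶ b}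
    (m : E ≫ E ⟶ E) (t : E ≫ E ⟶ E ≫ E) (dl : E ⟶ E ≫ E)
    (d : E ≫ X ⟶ X ≫ E) (v : E ≫ X ⟶ X) (w : E ≫ Y ⟶ Y)
    (hcompat : m ≫ dl = dl ▷ E ≫ (E ≫ E) ◁ dl ≫ tmul m m t)
    (dmul : E ◁ d ≫ (α_ E X E).inv ≫ d ▷ E ≫ (α_ X E E).hom ≫ X ◁ m
      = (α_ E E X).inv ≫ m ▷ X ≫ d)
    (dact : E ◁ v ≫ d = (α_ E E X).inv ≫ t ▷ X ≫ (α_ E E X).hom ≫ E ◁ d ≫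
        (α_ E X E).inv ≫ v ▷ E)
    (vassoc : (α_ E E X).inv ≫ m ▷ X ≫ v = E ◁ v ≫ v)
    (wassoc : (α_ E E Y).inv ≫ m ▷ Y ≫ w = E ◁ w ≫ w) :
    (α_ E E (X ≫ Y)).inv ≫ m ▷ (X ≫ Y) ≫ (dl ▷ (X ≫ Y) ≫ actT d v w)
      = E ◁ (dl ▷ (X ≫ Y) ≫ actT d v w) ≫ (dl ▷ (X ≫ Y) ≫ actT d v w) := by
  have lhs_eq : (α_ E E (X ≫ Y)).inv ≫ m ▷ (X ≫ Y) ≫ (dl ▷ (X ≫ Y) ≫ actT d v w)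
      = 𝟙 _ ⊗≫ dl ▷ (E ≫ X ≫ Y) ⊗≫ E ◁ (E ◁ (dl ▷ (X ≫ Y)))
        ⊗≫ E ◁ (E ◁ (E ◁ (d ▷ Y))) ⊗≫ E ◁ (t ▷ (X ≫ E ≫ Y))
        ⊗≫ E ◁ (E ◁ (d ▷ (E ≫ Y))) ⊗≫ m ▷ (X ≫ E ≫ E ≫ Y)
        ⊗≫ v ▷ (E ≫ E ≫ Y) ⊗≫ X ◁ (m ▷ Y) ⊗≫ X ◁ w := by
    calc (α_ E E (X ≫ Y)).inv ≫ m ▷ (X ≫ Y) ≫ (dl ▷ (X ≫ Y) ≫ actT d v w)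
        = 𝟙 _ ⊗≫ (m ≫ dl) ▷ (X ≫ Y) ⊗≫ E ◁ (d ▷ Y) ⊗≫ v ▷ (E ≫ Y) ⊗≫ X ◁ w := by
          unfold actT; bicategory
      _ = 𝟙 _ ⊗≫ (dl ▷ E ≫ (E ≫ E) ◁ dl ≫ tmul m m t) ▷ (X ≫ Y)
            ⊗≫ E ◁ (d ▷ Y) ⊗≫ v ▷ (E ≫ Y) ⊗≫ X ◁ w := by rw [hcompat]
      _ = 𝟙 _ ⊗≫ dl ▷ (E ≫ X ≫ Y) ⊗≫ E ◁ (E ◁ (dl ▷ (X ≫ Y)))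
            ⊗≫ E ◁ (t ▷ (E ≫ X ≫ Y)) ⊗≫ m ▷ (E ≫ E ≫ X ≫ Y)
            ⊗≫ E ◁ (((α_ E E X).inv ≫ m ▷ X ≫ d) ▷ Y)
            ⊗≫ v ▷ (E ≫ Y) ⊗≫ X ◁ w := by
          unfold tmul; bicategory
      _ = 𝟙 _ ⊗≫ dl ▷ (E ≫ X ≫ Y) ⊗≫ E ◁ (E ◁ (dl ▷ (X ≫ Y)))
            ⊗≫ E ◁ (t ▷ (E ≫ X ≫ Y)) ⊗≫ m ▷ (E ≫ E ≫ X ≫ Y)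
            ⊗≫ E ◁ ((E ◁ d ≫ (α_ E X E).inv ≫ d ▷ E ≫ (α_ X E E).hom ≫ X ◁ m) ▷ Y)
            ⊗≫ v ▷ (E ≫ Y) ⊗≫ X ◁ w := by rw [← dmul]
      _ = 𝟙 _ ⊗≫ dl ▷ (E ≫ X ≫ Y) ⊗≫ E ◁ (E ◁ (dl ▷ (X ≫ Y)))
            ⊗≫ E ◁ (t ▷ (E ≫ X ≫ Y))
            ⊗≫ (m ▷ (E ≫ (E ≫ X) ≫ Y) ≫ E ◁ (E ◁ (d ▷ Y)))
            ⊗≫ E ◁ (d ▷ (E ≫ Y)) ⊗≫ E ◁ (X ◁ (m ▷ Y))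
            ⊗≫ v ▷ (E ≫ Y) ⊗≫ X ◁ w := by bicategory
      _ = 𝟙 _ ⊗≫ dl ▷ (E ≫ X ≫ Y) ⊗≫ E ◁ (E ◁ (dl ▷ (X ≫ Y)))
            ⊗≫ E ◁ (t ▷ (E ≫ X ≫ Y))
            ⊗≫ ((E ≫ E) ◁ (E ◁ (d ▷ Y)) ≫ m ▷ (E ≫ (X ≫ E) ≫ Y))
            ⊗≫ E ◁ (d ▷ (E ≫ Y)) ⊗≫ E ◁ (X ◁ (m ▷ Y))
            ⊗≫ v ▷ (E ≫ Y) ⊗≫ X ◁ w := by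
          rw [← whisker_exchange m (E ◁ (d ▷ Y))]
      _ = 𝟙 _ ⊗≫ dl ▷ (E ≫ X ≫ Y) ⊗≫ E ◁ (E ◁ (dl ▷ (X ≫ Y)))
            ⊗≫ E ◁ (t ▷ ((E ≫ X) ≫ Y) ≫ (E ≫ E) ◁ (d ▷ Y))
            ⊗≫ (m ▷ ((E ≫ X) ≫ E ≫ Y) ≫ E ◁ (d ▷ (E ≫ Y)))
            ⊗≫ E ◁ (X ◁ (m ▷ Y))
            ⊗≫ v ▷ (E ≫ Y) ⊗≫ X ◁ w := by bicategory
      _ = 𝟙 _ ⊗≫ dl ▷ (E ≫ X ≫ Y) ⊗≫ E ◁ (E ◁ (dl ▷ (X ≫ Y)))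
            ⊗≫ E ◁ ((E ≫ E) ◁ (d ▷ Y) ≫ t ▷ ((X ≫ E) ≫ Y))
            ⊗≫ ((E ≫ E) ◁ (d ▷ (E ≫ Y)) ≫ m ▷ ((X ≫ E) ≫ E ≫ Y))
            ⊗≫ E ◁ (X ◁ (m ▷ Y))
            ⊗≫ v ▷ (E ≫ Y) ⊗≫ X ◁ w := by
          rw [← whisker_exchange m (d ▷ (E ≫ Y)), ← whisker_exchange t (d ▷ Y)]
      _ = 𝟙 _ ⊗≫ dl ▷ (E ≫ X ≫ Y) ⊗≫ E ◁ (E ◁ (dl ▷ (X ≫ Y)))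
            ⊗≫ E ◁ (E ◁ (E ◁ (d ▷ Y))) ⊗≫ E ◁ (t ▷ (X ≫ E ≫ Y))
            ⊗≫ E ◁ (E ◁ (d ▷ (E ≫ Y))) ⊗≫ m ▷ (X ≫ E ≫ E ≫ Y)
            ⊗≫ ((E ≫ X) ◁ (m ▷ Y) ≫ v ▷ (E ≫ Y)) ⊗≫ X ◁ w := by bicategory
      _ = 𝟙 _ ⊗≫ dl ▷ (E ≫ X ≫ Y) ⊗≫ E ◁ (E ◁ (dl ▷ (X ≫ Y)))
            ⊗≫ E ◁ (E ◁ (E ◁ (d ▷ Y))) ⊗≫ E ◁ (t ▷ (X ≫ E ≫ Y))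
            ⊗≫ E ◁ (E ◁ (d ▷ (E ≫ Y))) ⊗≫ m ▷ (X ≫ E ≫ E ≫ Y)
            ⊗≫ (v ▷ ((E ≫ E) ≫ Y) ≫ X ◁ (m ▷ Y)) ⊗≫ X ◁ w := by
          rw [whisker_exchange v (m ▷ Y)]
      _ = 𝟙 _ ⊗≫ dl ▷ (E ≫ X ≫ Y) ⊗≫ E ◁ (E ◁ (dl ▷ (X ≫ Y)))
            ⊗≫ E ◁ (E ◁ (E ◁ (d ▷ Y))) ⊗≫ E ◁ (t ▷ (X ≫ E ≫ Y))
            ⊗≫ E ◁ (E ◁ (d ▷ (E ≫ Y))) ⊗≫ m ▷ (X ≫ E ≫ E ≫ Y)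
            ⊗≫ v ▷ (E ≫ E ≫ Y) ⊗≫ X ◁ (m ▷ Y) ⊗≫ X ◁ w := by bicategory
  have rhs_eq : E ◁ (dl ▷ (X ≫ Y) ≫ actT d v w) ≫ (dl ▷ (X ≫ Y) ≫ actT d v w)
      = 𝟙 _ ⊗≫ dl ▷ (E ≫ X ≫ Y) ⊗≫ E ◁ (E ◁ (dl ▷ (X ≫ Y)))
        ⊗≫ E ◁ (E ◁ (E ◁ (d ▷ Y))) ⊗≫ E ◁ (t ▷ (X ≫ E ≫ Y))
        ⊗≫ E ◁ (E ◁ (d ▷ (E ≫ Y))) ⊗≫ m ▷ (X ≫ E ≫ E ≫ Y)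
        ⊗≫ v ▷ (E ≫ E ≫ Y) ⊗≫ X ◁ (m ▷ Y) ⊗≫ X ◁ w := by
    calc E ◁ (dl ▷ (X ≫ Y) ≫ actT d v w) ≫ (dl ▷ (X ≫ Y) ≫ actT d v w)
        = 𝟙 _ ⊗≫ (E ◁ (dl ▷ (X ≫ Y) ≫ actT d v w) ≫ dl ▷ (X ≫ Y)) ⊗≫ actT d v w := by
          bicategory
      _ = 𝟙 _ ⊗≫ (dl ▷ (E ≫ X ≫ Y) ≫ (E ≫ E) ◁ (dl ▷ (X ≫ Y) ≫ actT d v w)) ⊗≫ actT d v w := by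
          rw [whisker_exchange dl (dl ▷ (X ≫ Y) ≫ actT d v w)]
      _ = 𝟙 _ ⊗≫ dl ▷ (E ≫ X ≫ Y) ⊗≫ E ◁ (E ◁ (dl ▷ (X ≫ Y)))
            ⊗≫ E ◁ (E ◁ (E ◁ (d ▷ Y))) ⊗≫ E ◁ (E ◁ (v ▷ (E ≫ Y)))
            ⊗≫ E ◁ (((E ≫ X) ◁ w ≫ d ▷ Y)) ⊗≫ v ▷ (E ≫ Y) ⊗≫ X ◁ w := by
          unfold actT; bicategory
      _ = 𝟙 _ ⊗≫ dl ▷ (E ≫ X ≫ Y) ⊗≫ E ◁ (E ◁ (dl ▷ (X ≫ Y)))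
            ⊗≫ E ◁ (E ◁ (E ◁ (d ▷ Y))) ⊗≫ E ◁ (E ◁ (v ▷ (E ≫ Y)))
            ⊗≫ E ◁ ((d ▷ (E ≫ Y) ≫ (X ≫ E) ◁ w)) ⊗≫ v ▷ (E ≫ Y) ⊗≫ X ◁ w := by
          rw [whisker_exchange d w]
      _ = 𝟙 _ ⊗≫ dl ▷ (E ≫ X ≫ Y) ⊗≫ E ◁ (E ◁ (dl ▷ (X ≫ Y)))
            ⊗≫ E ◁ (E ◁ (E ◁ (d ▷ Y)))
            ⊗≫ E ◁ ((E ◁ v ≫ d) ▷ (E ≫ Y))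
            ⊗≫ E ◁ (X ◁ (E ◁ w)) ⊗≫ v ▷ (E ≫ Y) ⊗≫ X ◁ w := by bicategory
      _ = 𝟙 _ ⊗≫ dl ▷ (E ≫ X ≫ Y) ⊗≫ E ◁ (E ◁ (dl ▷ (X ≫ Y)))
            ⊗≫ E ◁ (E ◁ (E ◁ (d ▷ Y)))
            ⊗≫ E ◁ (((α_ E E X).inv ≫ t ▷ X ≫ (α_ E E X).hom ≫ E ◁ d ≫
                (α_ E X E).inv ≫ v ▷ E) ▷ (E ≫ Y))
            ⊗≫ E ◁ (X ◁ (E ◁ w)) ⊗≫ v ▷ (E ≫ Y) ⊗≫ X ◁ w := by rw [← dact]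
      _ = 𝟙 _ ⊗≫ dl ▷ (E ≫ X ≫ Y) ⊗≫ E ◁ (E ◁ (dl ▷ (X ≫ Y)))
            ⊗≫ E ◁ (E ◁ (E ◁ (d ▷ Y))) ⊗≫ E ◁ (t ▷ (X ≫ E ≫ Y))
            ⊗≫ E ◁ (E ◁ (d ▷ (E ≫ Y)))
            ⊗≫ E ◁ (v ▷ (E ≫ E ≫ Y))
            ⊗≫ ((E ≫ X) ◁ (E ◁ w) ≫ v ▷ (E ≫ Y)) ⊗≫ X ◁ w := by bicategory
      _ = 𝟙 _ ⊗≫ dl ▷ (E ≫ X ≫ Y) ⊗≫ E ◁ (E ◁ (dl ▷ (X ≫ Y)))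
            ⊗≫ E ◁ (E ◁ (E ◁ (d ▷ Y))) ⊗≫ E ◁ (t ▷ (X ≫ E ≫ Y))
            ⊗≫ E ◁ (E ◁ (d ▷ (E ≫ Y)))
            ⊗≫ E ◁ (v ▷ (E ≫ E ≫ Y))
            ⊗≫ (v ▷ (E ≫ E ≫ Y) ≫ X ◁ (E ◁ w)) ⊗≫ X ◁ w := by
          rw [whisker_exchange v (E ◁ w)]
      _ = 𝟙 _ ⊗≫ dl ▷ (E ≫ X ≫ Y) ⊗≫ E ◁ (E ◁ (dl ▷ (X ≫ Y)))
            ⊗≫ E ◁ (E ◁ (E ◁ (d ▷ Y))) ⊗≫ E ◁ (t ▷ (X ≫ E ≫ Y))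
            ⊗≫ E ◁ (E ◁ (d ▷ (E ≫ Y)))
            ⊗≫ ((E ◁ v ≫ v) ▷ (E ≫ E ≫ Y))
            ⊗≫ X ◁ (E ◁ w ≫ w) := by bicategory
      _ = 𝟙 _ ⊗≫ dl ▷ (E ≫ X ≫ Y) ⊗≫ E ◁ (E ◁ (dl ▷ (X ≫ Y)))
            ⊗≫ E ◁ (E ◁ (E ◁ (d ▷ Y))) ⊗≫ E ◁ (t ▷ (X ≫ E ≫ Y))
            ⊗≫ E ◁ (E ◁ (d ▷ (E ≫ Y)))
            ⊗≫ (((α_ E E X).inv ≫ m ▷ X ≫ v) ▷ (E ≫ E ≫ Y))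
            ⊗≫ X ◁ ((α_ E E Y).inv ≫ m ▷ Y ≫ w) := by rw [vassoc, wassoc]
      _ = 𝟙 _ ⊗≫ dl ▷ (E ≫ X ≫ Y) ⊗≫ E ◁ (E ◁ (dl ▷ (X ≫ Y)))
            ⊗≫ E ◁ (E ◁ (E ◁ (d ▷ Y))) ⊗≫ E ◁ (t ▷ (X ≫ E ≫ Y))
            ⊗≫ E ◁ (E ◁ (d ▷ (E ≫ Y))) ⊗≫ m ▷ (X ≫ E ≫ E ≫ Y)
            ⊗≫ v ▷ (E ≫ E ≫ Y) ⊗≫ X ◁ (m ▷ Y) ⊗≫ X ◁ w := by bicategory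
  rw [lhs_eq, rhs_eq]

/-- Unitality of the diagonal action on the composite of two Tambara modules. -/
lemma aux_unit {b : K} {E X : a ⟶ a} {Y : a ⟶ b}
    (u : 𝟙 a ⟶ E) (dl : E ⟶ E ≫ E)
    (d : E ≫ X ⟶ X ≫ E) (v : E ≫ X ⟶ X) (w : E ≫ Y ⟶ Y)
    (hcu : u ≫ dl = tunit u u)
    (dunit : (λ_ X).inv ≫ u ▷ X ≫ d = (ρ_ X).inv ≫ X ◁ u)
    (vunit : (λ_ X).inv ≫ u ▷ X ≫ v = 𝟙 X)
    (wunit : (λ_ Y).inv ≫ u ▷ Y ≫ w = 𝟙 Y) :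
    (λ_ (X ≫ Y)).inv ≫ u ▷ (X ≫ Y) ≫ (dl ▷ (X ≫ Y) ≫ actT d v w) = 𝟙 (X ≫ Y) := by
  calc (λ_ (X ≫ Y)).inv ≫ u ▷ (X ≫ Y) ≫ (dl ▷ (X ≫ Y) ≫ actT d v w)
      = 𝟙 _ ⊗≫ (u ≫ dl) ▷ (X ≫ Y) ⊗≫ E ◁ (d ▷ Y) ⊗≫ v ▷ (E ≫ Y) ⊗≫ X ◁ w := by
        unfold actT; bicategory
    _ = 𝟙 _ ⊗≫ (tunit u u) ▷ (X ≫ Y) ⊗≫ E ◁ (d ▷ Y) ⊗≫ v ▷ (E ≫ Y) ⊗≫ X ◁ w := by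
        rw [hcu]
    _ = 𝟙 _ ⊗≫ u ▷ (X ≫ Y) ⊗≫ E ◁ (((λ_ X).inv ≫ u ▷ X ≫ d) ▷ Y)
        ⊗≫ v ▷ (E ≫ Y) ⊗≫ X ◁ w := by
        unfold tunit; bicategory
    _ = 𝟙 _ ⊗≫ u ▷ (X ≫ Y) ⊗≫ E ◁ (((ρ_ X).inv ≫ X ◁ u) ▷ Y)
        ⊗≫ v ▷ (E ≫ Y) ⊗≫ X ◁ w := by rw [dunit]
    _ = 𝟙 _ ⊗≫ u ▷ (X ≫ Y) ⊗≫ ((E ≫ X) ◁ (u ▷ Y) ≫ v ▷ (E ≫ Y)) ⊗≫ X ◁ w := by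
        bicategory
    _ = 𝟙 _ ⊗≫ u ▷ (X ≫ Y) ⊗≫ (v ▷ (𝟙 a ≫ Y) ≫ X ◁ (u ▷ Y)) ⊗≫ X ◁ w := by
        rw [whisker_exchange v (u ▷ Y)]
    _ = 𝟙 _ ⊗≫ ((λ_ X).inv ≫ u ▷ X ≫ v) ▷ Y ⊗≫ X ◁ ((λ_ Y).inv ≫ u ▷ Y ≫ w) ⊗≫ 𝟙 _ := by
        bicategory
    _ = 𝟙 (X ≫ Y) := by rw [vunit, wunit]; bicategory

/-- Let `B` be a monad with a comultiplication-type 2-cell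
`Δ : B ⟶ B ≫ B` compatible with the multiplication through the (left and right
monadic) distributive law `τBB`, and with the unit.  If `(X, τ_{B,X})` and
`(Y, τ_{B,Y})` are left Tambara `B`-modules, then `X ∘ Y` is a left `B`-module with
the diagonal action through `Δ`. -/
theorem tensor_of_tambara_modules_is_module {K : Type*} [Bicategory K]
    [Bicategory.Strict K] {a : K} (B : Mnd a) (τBB : B.E ≫ B.E ⟶ B.E ≫ B.E)
    (hlm : B.E ◁ τBB ≫ (α_ B.E B.E B.E).inv ≫ τBB ▷ B.E ≫ (α_ B.E B.E B.E).hom ≫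
        B.E ◁ B.mul = (α_ B.E B.E B.E).inv ≫ B.mul ▷ B.E ≫ τBB)
    (hlu : (λ_ B.E).inv ≫ B.unit ▷ B.E ≫ τBB = (ρ_ B.E).inv ≫ B.E ◁ B.unit)
    (hrm : τBB ▷ B.E ≫ (α_ B.E B.E B.E).hom ≫ B.E ◁ τBB ≫ (α_ B.E B.E B.E).inv ≫
        B.mul ▷ B.E = (α_ B.E B.E B.E).hom ≫ B.E ◁ B.mul ≫ τBB)
    (hru : (ρ_ B.E).inv ≫ B.E ◁ B.unit ≫ τBB = (λ_ B.E).inv ≫ B.unit ▷ B.E)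
    (comul : B.E ⟶ B.E ≫ B.E)
    (hcompat : B.mul ≫ comul
      = comul ▷ B.E ≫ (B.E ≫ B.E) ◁ comul ≫ tmul B.mul B.mul τBB)
    (hcu : B.unit ≫ comul = tunit B.unit B.unit)
    (P1 P2 : TambMod B τBB) :
    ∃ L : LMod B (P1.X ≫ P2.X),
      L.act = comul ▷ (P1.X ≫ P2.X) ≫ actT P1.d P1.act P2.act :=
  ⟨⟨comul ▷ (P1.X ≫ P2.X) ≫ actT P1.d P1.act P2.act,
    aux_assoc B.mul τBB comul P1.d P1.act P2.act hcompat P1.d_mul P1.d_act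
      P1.act_assoc P2.act_assoc,
    aux_unit B.unit comul P1.d P1.act P2.act hcu P1.d_unit P1.act_unit P2.act_unit⟩, rfl⟩

end Paper
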